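/- arXiv:1608.01510 — 3 statements merged into one kernel-verified Lean document; each statement's English description precedes it below -/
import Mathlib

section
/- Let A be a finite nonempty type, let β¹ and β² be probability distributions on A, and let v : A → ℝ be a function with v_min ≤ v(a) ≤ v_max for all a ∈ A. Then |∑_{a∈A} β¹(a)·v(a) − ∑_{a∈A} β²(a)·v(a)| ≤ ((v_max − v_min)/2) · ∑_{a∈A} |β¹(a) − β²(a)|. -/
/-- Per-information-set value bound (Lemma 3 of the appendix): changing a
probability distribution from `β₁` to `β₂` changes the expected value of a
bounded function `v` by at most half the range of `v` times the L1 distance. -/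
theorem stmt_0 {A : Type*} [Fintype A] [Nonempty A]
    (β₁ β₂ v : A → ℝ) (vmin vmax : ℝ)
    (hβ₁0 : ∀ a, 0 ≤ β₁ a) (hβ₁1 : ∑ a, β₁ a = 1)
    (hβ₂0 : ∀ a, 0 ≤ β₂ a) (hβ₂1 : ∑ a, β₂ a = 1)
    (hvmin : ∀ a, vmin ≤ v a) (hvmax : ∀ a, v a ≤ vmax) :
    |(∑ a, β₁ a * v a) - ∑ a, β₂ a * v a| ≤
      ((vmax - vmin) / 2) * ∑ a, |β₁ a - β₂ a| := by
  set c := (vmin + vmax) / 2 with hc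
  have key : (∑ a, β₁ a * v a) - ∑ a, β₂ a * v a
      = ∑ a, (β₁ a - β₂ a) * (v a - c) := by
    simp only [sub_mul, mul_sub, Finset.sum_sub_distrib, ← Finset.sum_mul,
      hβ₁1, hβ₂1, one_mul]
    ring
  rw [key, Finset.mul_sum]
  refine (Finset.abs_sum_le_sum_abs _ _).trans (Finset.sum_le_sum fun a _ => ?_)
  rw [abs_mul, mul_comm]
  gcongr
  rw [abs_le]
  constructor <;> nlinarith [hvmin a, hvmax a]
end

section
/- Let P be a natural number, set δ = 10^{−P}, and let b, c, c_L, c_U be real numbers with 0 ≤ b ≤ 1 and c_L ≤ c ≤ c_U. Then there exist real numbers b̲, Δb, Δa such that: 10^{P}·b̲ is an integer; 0 ≤ b̲; b = b̲ + Δb; 0 ≤ Δb ≤ δ; b·c = b̲·c + Δa; c_L·Δb ≤ Δa ≤ c_U·Δb; (c − c_U)·δ + c_U·Δb ≤ Δa; and Δa ≤ (c − c_L)·δ + c_L·Δb. -/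
/-- Soundness of the MDT upper-bound reformulation: any exact solution of the
bilinear term `b·c` with `b ∈ [0,1]` and `c ∈ [c_L, c_U]` remains feasible for
the relaxed constraints of the Upper Bound MILP. -/
theorem stmt_8 (P : ℕ) (b c cL cU : ℝ)
    (hb0 : 0 ≤ b) (hb1 : b ≤ 1) (hcL : cL ≤ c) (hcU : c ≤ cU) :
    ∃ bLow Δb Δa : ℝ,
      (∃ n : ℤ, (10 : ℝ) ^ P * bLow = (n : ℝ)) ∧
      0 ≤ bLow ∧
      b = bLow + Δb ∧
      0 ≤ Δb ∧ Δb ≤ (10 : ℝ) ^ (-(P : ℤ)) ∧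
      b * c = bLow * c + Δa ∧
      cL * Δb ≤ Δa ∧ Δa ≤ cU * Δb ∧
      (c - cU) * (10 : ℝ) ^ (-(P : ℤ)) + cU * Δb ≤ Δa ∧
      Δa ≤ (c - cL) * (10 : ℝ) ^ (-(P : ℤ)) + cL * Δb := by
  have hpow : (0 : ℝ) < (10 : ℝ) ^ P := by positivity
  set t : ℝ := (10 : ℝ) ^ P with ht
  set bLow : ℝ := (⌊t * b⌋ : ℝ) / t with hbl
  have hδ : (10 : ℝ) ^ (-(P : ℤ)) = t⁻¹ := by
    rw [zpow_neg, zpow_natCast]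
  set Δb : ℝ := b - bLow with hdb
  have hfl0 : (0 : ℝ) ≤ (⌊t * b⌋ : ℝ) := by
    exact_mod_cast Int.floor_nonneg.mpr (by positivity)
  have hbl0 : 0 ≤ bLow := div_nonneg hfl0 hpow.le
  have hfl : (⌊t * b⌋ : ℝ) ≤ t * b := Int.floor_le _
  have hfl1 : t * b < (⌊t * b⌋ : ℝ) + 1 := Int.lt_floor_add_one _
  have htinv : 0 < t⁻¹ := by positivity
  have hdb0 : 0 ≤ Δb := by
    rw [hdb, hbl, sub_nonneg, div_le_iff₀ hpow]
    nlinarith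
  have hdb1 : Δb ≤ t⁻¹ := by
    rw [hdb, hbl]
    rw [sub_le_iff_le_add]
    rw [inv_eq_one_div, ← add_div, le_div_iff₀ hpow]
    nlinarith
  refine ⟨bLow, Δb, c * Δb, ⟨⌊t * b⌋, by rw [hbl]; field_simp⟩, hbl0,
    by ring, hdb0, by rw [hδ]; exact hdb1, by ring, ?_, ?_, ?_, ?_⟩
  · nlinarith
  · nlinarith
  · rw [hδ]; nlinarith
  · rw [hδ]; nlinarith
end

section
/- Let I be a finite type and for each i ∈ I let A_i be a finite nonempty type. Let f : (Π i, (A_i → ℝ)) → ℝ be affine in each coordinate block, i.e., for every i ∈ I, every β : Π i, (A_i → ℝ), every t, t' : A_i → ℝ and every s ∈ ℝ, f(update β i (s·t + (1−s)·t')) = s·f(update β i t) + (1−s)·f(update β i t'). Then for every β such that β_i is a probability distribution on A_i for each i, there exists a pure profile a : Π i, A_i such that f(β) ≤ f(δ_a), where δ_a assigns to each i the point distribution putting probability 1 on a_i. -/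
/-- Single-coordinate step: replacing a probability distribution at coordinate `i`
by some Dirac point weakly increases `f`. -/
lemma pure_step {I : Type*} [DecidableEq I]
    {A : I → Type*} [∀ i, Fintype (A i)] [∀ i, Nonempty (A i)]
    [∀ i, DecidableEq (A i)]
    (f : (∀ i, A i → ℝ) → ℝ)
    (haff : ∀ (i : I) (β : ∀ i, A i → ℝ) (t t' : A i → ℝ) (s : ℝ),
      f (Function.update β i (fun a => s * t a + (1 - s) * t' a)) =
        s * f (Function.update β i t) + (1 - s) * f (Function.update β i t'))
    (i : I) (β : ∀ i, A i → ℝ)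
    (h0 : ∀ a, 0 ≤ β i a) (h1 : ∑ a, β i a = 1) :
    ∃ b : A i, f β ≤ f (Function.update β i (fun x => if x = b then 1 else 0)) := by
  set g : (A i → ℝ) → ℝ := fun t => f (Function.update β i t) with hg
  have gaff : ∀ (t t' : A i → ℝ) (s : ℝ),
      g (s • t + (1 - s) • t') = s * g t + (1 - s) * g t' := by
    intro t t' s
    have := haff i β t t' s
    have e : s • t + (1 - s) • t' = fun a => s * t a + (1 - s) * t' a := by
      funext a; simp
    simpa [hg, e] using this
  -- h is linear
  set h : (A i → ℝ) → ℝ := fun t => g t - g 0 with hh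
  have hsmul : ∀ (s : ℝ) (t : A i → ℝ), h (s • t) = s * h t := by
    intro s t
    have := gaff t 0 s
    simp only [smul_zero, add_zero] at this
    simp [hh, this]
    ring
  have hadd : ∀ t t' : A i → ℝ, h (t + t') = h t + h t' := by
    intro t t'
    have half : ((1:ℝ)/2) • t + ((1:ℝ)/2) • t' = ((1:ℝ)/2) • (t + t') := by
      rw [smul_add]
    have e1 : g (((1:ℝ)/2) • t + (1 - (1:ℝ)/2) • t') =
        ((1:ℝ)/2) * g t + (1 - (1:ℝ)/2) * g t' := gaff t t' ((1:ℝ)/2)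
    have e2 : h ((2:ℝ) • (((1:ℝ)/2) • (t + t'))) = 2 * h (((1:ℝ)/2) • (t + t')) :=
      hsmul 2 _
    have e3 : (2:ℝ) • (((1:ℝ)/2) • (t + t')) = t + t' := by
      rw [smul_smul]; norm_num
    have e4 : (1 - (1:ℝ)/2) = ((1:ℝ)/2) := by norm_num
    rw [e3] at e2
    rw [e4] at e1
    rw [← half] at e2
    simp only [hh] at e2 ⊢
    rw [e2, e1]
    ring
  let L : (A i → ℝ) →ₗ[ℝ] ℝ :=
    { toFun := h
      map_add' := hadd
      map_smul' := fun s t => by simpa [smul_eq_mul] using hsmul s t }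
  -- Dirac functions
  set δ : A i → (A i → ℝ) := fun a x => if x = a then (1:ℝ) else 0 with hδ
  have hdecomp : β i = ∑ a : A i, β i a • δ a := by
    funext x
    simp only [Finset.sum_apply, Pi.smul_apply, hδ, smul_eq_mul, mul_ite, mul_one, mul_zero]
    rw [Finset.sum_ite_eq (Finset.univ) x (fun a => β i a)]
    simp
  have key : ∀ w : A i → ℝ, (∑ a, w a = 1) →
      g (∑ a : A i, w a • δ a) = ∑ a : A i, w a * g (δ a) := by
    intro w hw
    have hL : L (∑ a : A i, w a • δ a) = ∑ a : A i, w a * L (δ a) := by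
      rw [map_sum]
      simp [smul_eq_mul]
    have hLdef : ∀ t, L t = g t - g 0 := fun t => rfl
    simp only [hLdef] at hL
    have hs : ∑ a : A i, w a * (g (δ a) - g 0) =
        (∑ a : A i, w a * g (δ a)) - (∑ a : A i, w a) * g 0 := by
      simp only [mul_sub]
      rw [Finset.sum_sub_distrib, ← Finset.sum_mul]
    rw [hs, hw] at hL
    linarith [hL]
  -- choose the best Dirac
  obtain ⟨b, -, hb⟩ := Finset.exists_max_image Finset.univ (fun a => g (δ a))
    ⟨Classical.arbitrary (A i), Finset.mem_univ _⟩
  refine ⟨b, ?_⟩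
  have hfβ : f β = ∑ a : A i, β i a * g (δ a) := by
    have h1' : f β = g (β i) := by simp [hg, Function.update_eq_self]
    rw [h1']
    conv_lhs => rw [hdecomp]
    exact key (β i) h1
  rw [hfβ]
  have hbound : ∑ a : A i, β i a * g (δ a) ≤ ∑ a : A i, β i a * g (δ b) := by
    apply Finset.sum_le_sum
    intro a _
    exact mul_le_mul_of_nonneg_left (hb a (Finset.mem_univ a)) (h0 a)
  calc ∑ a : A i, β i a * g (δ a) ≤ ∑ a : A i, β i a * g (δ b) := hbound
    _ = (∑ a : A i, β i a) * g (δ b) := by rw [Finset.sum_mul]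
    _ = g (δ b) := by rw [h1, one_mul]

/-- Core of Lemma 1: a function that is affine in each coordinate block over a
product of probability simplices is weakly maximized, compared to any profile
of probability distributions, at some pure (Dirac) profile. -/
theorem stmt_9 {I : Type*} [Fintype I] [DecidableEq I]
    {A : I → Type*} [∀ i, Fintype (A i)] [∀ i, Nonempty (A i)]
    [∀ i, DecidableEq (A i)]
    (f : (∀ i, A i → ℝ) → ℝ)
    (haff : ∀ (i : I) (β : ∀ i, A i → ℝ) (t t' : A i → ℝ) (s : ℝ),
      f (Function.update β i (fun a => s * t a + (1 - s) * t' a)) =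
        s * f (Function.update β i t) + (1 - s) * f (Function.update β i t'))
    (β : ∀ i, A i → ℝ)
    (hβ0 : ∀ i a, 0 ≤ β i a) (hβ1 : ∀ i, ∑ a, β i a = 1) :
    ∃ a : ∀ i, A i,
      f β ≤ f (fun i b => if b = a i then (1 : ℝ) else 0) := by
  -- purify coordinates one at a time over a finset
  have main : ∀ s : Finset I, ∃ a : ∀ i, A i,
      f β ≤ f (fun j => if j ∈ s then (fun b => if b = a j then (1:ℝ) else 0) else β j) := by
    intro s
    induction s using Finset.induction with
    | empty =>
        refine ⟨fun i => Classical.arbitrary (A i), ?_⟩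
        simp
    | @insert i s' hi ih =>
        obtain ⟨a, ha⟩ := ih
        set γ : ∀ j, A j → ℝ :=
          fun j => if j ∈ s' then (fun b => if b = a j then (1:ℝ) else 0) else β j with hγ
        have hγi : γ i = β i := by simp [hγ, hi]
        have hγ0 : ∀ x, 0 ≤ γ i x := by rw [hγi]; exact hβ0 i
        have hγ1 : ∑ x, γ i x = 1 := by rw [hγi]; exact hβ1 i
        obtain ⟨b, hb⟩ := pure_step f haff i γ hγ0 hγ1
        refine ⟨Function.update a i b, ?_⟩
        have heq : (fun j => if j ∈ insert i s'
            then (fun c => if c = Function.update a i b j then (1:ℝ) else 0) else β j) =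
            Function.update γ i (fun x => if x = b then (1:ℝ) else 0) := by
          funext j
          by_cases hj : j = i
          · subst hj
            simp [Function.update_self]
          · simp only [Function.update_of_ne hj]
            by_cases hjs : j ∈ s'
            · simp [hγ, hjs, hj, Finset.mem_insert]
            · simp [hγ, hjs, hj, Finset.mem_insert]
        rw [heq]
        exact le_trans ha hb
  obtain ⟨a, ha⟩ := main Finset.univ
  exact ⟨a, by simpa using ha⟩
end
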